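/- For every n ≥ 1, every term-resolution proof of the empty term from the QCNF Φₙ contains at least 2ⁿ distinct terms (i.e. the proof has size at least exponential in n). -/

import Mathlib

/-!
Framework for prenex QCNF: variables are natural numbers; a quantifier prefix is
given by `ex : Var → Bool` (`ex v = true` iff variable `v` is existential), and
the prefix order on variables (hence on literals) is `<` on ℕ.
-/

abbrev Var := ℕ

/-- A literal: a variable together with a polarity (`pos = true` for `x`, `false` for `x̄`). -/
structure Lit where
  var : Var
  pos : Bool
deriving DecidableEq

/-- The complementary literal. -/
def Lit.neg (l : Lit) : Lit := ⟨l.var, !l.pos⟩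

/-- Clauses (disjunctions) and terms (conjunctions) are finite sets of literals. -/
abbrev Clause := Finset Lit
abbrev Term := Finset Lit

/-- A set of literals contains no complementary pair. -/
def LitSetOk (C : Finset Lit) : Prop := ∀ l ∈ C, l.neg ∉ C

instance (C : Finset Lit) : Decidable (LitSetOk C) :=
  inferInstanceAs (Decidable (∀ l ∈ C, l.neg ∉ C))

/-- The resOf on pivot literal `p` (used both for clauses and for terms). -/
def resOf (p : Lit) (A B : Finset Lit) : Finset Lit := A.erase p ∪ B.erase p.neg

/-- Resolution of `A` (containing `p`) with `B` (containing `p.neg`) is defined: the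
union of the side literals contains no complementary pair and neither `p` nor `p.neg`. -/
def ResOk (p : Lit) (A B : Finset Lit) : Prop :=
  p ∈ A ∧ p.neg ∈ B ∧ p ∉ resOf p A B ∧ p.neg ∉ resOf p A B ∧
    LitSetOk (resOf p A B)

instance (p : Lit) (A B : Finset Lit) : Decidable (ResOk p A B) :=
  inferInstanceAs (Decidable (p ∈ A ∧ p.neg ∈ B ∧ p ∉ resOf p A B ∧
    p.neg ∉ resOf p A B ∧ LitSetOk (resOf p A B)))

/-- ∀-reduction: `C'` results from `C` by removing every universal literal `l` such
that no existential literal `k ∈ C` satisfies `l < k`. -/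
def IsForallReduct (ex : Var → Bool) (C C' : Clause) : Prop :=
  ∀ l : Lit, l ∈ C' ↔ l ∈ C ∧ (ex l.var = true ∨ ∃ k ∈ C, ex k.var = true ∧ l.var < k.var)

/-- QU-resolution proofs of a clause from the matrix `φ` under the prefix `ex`:
every clause is in `φ`, or a QU-resOf of two earlier clauses (the pivot may be
universal), or results from an earlier clause by ∀-reduction. -/
inductive QUProof (ex : Var → Bool) (φ : Finset Clause) : Clause → Prop
  | ax {C : Clause} : C ∈ φ → QUProof ex φ C
  | res {A B : Clause} {p : Lit} : QUProof ex φ A → QUProof ex φ B → ResOk p A B →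
      QUProof ex φ (resOf p A B)
  | red {C C' : Clause} : QUProof ex φ C → IsForallReduct ex C C' → QUProof ex φ C'

/-- ∃-reduction: `T'` results from `T` by removing every existential literal `l` such
that no universal literal `k ∈ T` satisfies `l < k`. -/
def IsExistsReduct (ex : Var → Bool) (T T' : Term) : Prop :=
  ∀ l : Lit, l ∈ T' ↔ l ∈ T ∧ (ex l.var = false ∨ ∃ k ∈ T, ex k.var = false ∧ l.var < k.var)

/-- Model generation rule: `T` is generated from the matrix `φ` if every clause of `φ`
contains a literal belonging to `T`. -/
def ModelGen (φ : Finset Clause) (T : Term) : Prop := ∀ C ∈ φ, ∃ l ∈ C, l ∈ T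

/-- `π` is a term-resolution proof of the term `T` from the QCNF with prefix `ex` and
matrix `φ`: a finite sequence of terms ending in `T`, each generated by model
generation or obtained from earlier terms by ∃-reduction or term-resolution. -/
def IsTermResProof (ex : Var → Bool) (φ : Finset Clause) (π : List Term) (T : Term) : Prop :=
  π ≠ [] ∧ π.getLast? = some T ∧
    ∀ i : Fin π.length, LitSetOk (π.get i) ∧
      (ModelGen φ (π.get i) ∨
        (∃ j : Fin π.length, j < i ∧ IsExistsReduct ex (π.get j) (π.get i)) ∨
        (∃ j k : Fin π.length, j < i ∧ k < i ∧ ∃ p : Lit,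
          ResOk p (π.get j) (π.get k) ∧ π.get i = resOf p (π.get j) (π.get k)))

/-- Value of a literal under a total assignment. -/
def evalLit (σ : Var → Bool) (l : Lit) : Bool := if l.pos then σ l.var else !σ l.var

/-- A strategy assigns to each (existential) variable a Boolean function of the
universal assignment — the semantic counterpart of a propositional formula. -/
abbrev Strategy := Var → (Var → Bool) → Bool

/-- The total assignment induced by a strategy `M` and a universal assignment `τ`. -/
def Strategy.assign (ex : Var → Bool) (M : Strategy) (τ : Var → Bool) : Var → Bool :=
  fun v => if ex v then M v τ else τ v

/-- The definition of each existential variable depends only on the universal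
variables preceding it in the prefix. -/
def WellFormed (ex : Var → Bool) (M : Strategy) : Prop :=
  ∀ e, ex e = true → ∀ τ τ' : Var → Bool,
    (∀ u, ex u = false → u < e → τ u = τ' u) → M e τ = M e τ'

/-- `M` is a model of the QCNF with prefix `ex` and matrix `φ`: it is a well-formed
strategy and `M(φ)` is a tautology. -/
def IsModel (ex : Var → Bool) (φ : Finset Clause) (M : Strategy) : Prop :=
  WellFormed ex M ∧
    ∀ τ : Var → Bool, ∀ C ∈ φ, ∃ l ∈ C, evalLit (Strategy.assign ex M τ) l = true

/-- A term `T` agrees with an assignment `τ` to the universal variables iff there is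
no (universal) literal `l` with `l̄ ∈ T` and `τ(l) = 1`. -/
def Agrees (ex : Var → Bool) (τ : Var → Bool) (T : Term) : Prop :=
  ¬∃ l : Lit, ex l.var = false ∧ l.neg ∈ T ∧ evalLit τ l = true

/-- Edge `a → b` of the binary implication graph of `φ`: the binary clause
`a.neg ∨ b` is in `φ` (a clause `l₁ ∨ l₂` yields the edges `l̄₁ → l₂`, `l̄₂ → l₁`). -/
def ImpEdge (φ : Finset Clause) (a b : Lit) : Prop :=
  a ≠ b ∧ a.neg ≠ b ∧ ({a.neg, b} : Clause) ∈ φ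

/-- The existential literal `l` of the clause `C` is blocked in the matrix `φ`. -/
def BlockedIn (ex : Var → Bool) (φ : Finset Clause) (C : Clause) (l : Lit) : Prop :=
  ex l.var = true ∧ l ∈ C ∧ ∀ D ∈ φ, l.neg ∈ D → ∃ k ∈ C, k.var < l.var ∧ k.neg ∈ D

/-- One step of blocked clause elimination: remove one blocked clause. -/
def BCEStep (ex : Var → Bool) (φ φ' : Finset Clause) : Prop :=
  ∃ C ∈ φ, (∃ l, BlockedIn ex φ C l) ∧ φ' = φ.erase C

/-- The side-condition for eliminating the existential variable `x` from the matrix `φ`. -/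
def VEside (x : Var) (φ : Finset Clause) : Prop :=
  ∀ C ∈ φ, (⟨x, true⟩ : Lit) ∈ C → (∃ k ∈ C, x < k.var) →
    ∀ D ∈ φ, (⟨x, false⟩ : Lit) ∈ D → ∃ z ∈ C, z.var < x ∧ z.neg ∈ D

/-- The set of all defined resolvents on `x` between the clauses of `φ` containing the
literal `x` and those containing `x̄`. -/
def VEresolvents (x : Var) (φ : Finset Clause) : Finset Clause :=
  ((φ ×ˢ φ).filter fun q => ResOk ⟨x, true⟩ q.1 q.2).image
    fun q => resOf ⟨x, true⟩ q.1 q.2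

/-- Variable elimination of `x`: replace all clauses mentioning `x` by all defined
resolvents on `x`. -/
def VEapply (x : Var) (φ : Finset Clause) : Finset Clause :=
  φ.filter (fun C => (⟨x, true⟩ : Lit) ∉ C ∧ (⟨x, false⟩ : Lit) ∉ C) ∪ VEresolvents x φ

/-- The variables of Φₙ (0-indexed): `uᵢ` is variable `2*i`, `eᵢ` is variable `2*i+1`,
so the prefix `∀u₀∃e₀…∀u_{n-1}∃e_{n-1}` is the natural order. -/
def uLit (i : ℕ) (b : Bool) : Lit := ⟨2 * i, b⟩
def eLit (i : ℕ) (b : Bool) : Lit := ⟨2 * i + 1, b⟩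

/-- The prefix of Φₙ: even variables universal, odd variables existential. -/
def phiEx : Var → Bool := fun v => v % 2 == 1

/-- The clause `ūᵢ ∨ eᵢ`. -/
def posClause (i : ℕ) : Clause := {uLit i false, eLit i true}
/-- The clause `uᵢ ∨ ēᵢ`. -/
def negClause (i : ℕ) : Clause := {uLit i true, eLit i false}

/-- The matrix of Φₙ: `⋀_{i<n} (ūᵢ ∨ eᵢ) ∧ (uᵢ ∨ ēᵢ)`. -/
def PhiMatrix (n : ℕ) : Finset Clause :=
  (Finset.range n).biUnion fun i => {posClause i, negClause i}

/-- The set `W` of witnesses for the literal `l` being blocked in the clause `C`. -/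
def witnesses (φ : Finset Clause) (C : Clause) (l : Lit) : Finset Lit :=
  C.filter fun k => k ≠ l ∧ k.var < l.var ∧ ∃ D ∈ φ, k.neg ∈ D ∧ l.neg ∈ D

/-- `φ` with all literals not less than `x` deleted from each clause. -/
def restrictBelow (x : Var) (φ : Finset Clause) : Finset Clause :=
  φ.image fun C => C.filter fun l => l.var < x


lemma Lit.neg_neg (l : Lit) : l.neg.neg = l := by
  simp [Lit.neg]

lemma evalLit_neg (τ : Var → Bool) (l : Lit) : evalLit τ l.neg = !evalLit τ l := by
  cases l with
  | mk v p => cases p <;> simp [evalLit, Lit.neg]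

lemma agrees_res {ex : Var → Bool} {τ : Var → Bool} {p : Lit} {A B : Term}
    (h : Agrees ex τ (resOf p A B)) : Agrees ex τ A ∨ Agrees ex τ B := by
  by_contra hc
  push_neg at hc
  obtain ⟨hA, hB⟩ := hc
  unfold Agrees at hA hB h
  rw [not_not] at hA hB
  obtain ⟨l1, he1, hm1, hv1⟩ := hA
  obtain ⟨l2, he2, hm2, hv2⟩ := hB
  have h1 : l1.neg = p := by
    by_contra hne
    exact h ⟨l1, he1, Finset.mem_union.2 (Or.inl (Finset.mem_erase.2 ⟨hne, hm1⟩)), hv1⟩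
  have h2 : l2.neg = p.neg := by
    by_contra hne
    exact h ⟨l2, he2, Finset.mem_union.2 (Or.inr (Finset.mem_erase.2 ⟨hne, hm2⟩)), hv2⟩
  have e1 : l1 = p.neg := by rw [← h1, Lit.neg_neg]
  have e2 : l2 = p := by
    have := congrArg Lit.neg h2
    rwa [Lit.neg_neg, Lit.neg_neg] at this
  rw [e1, evalLit_neg] at hv1
  rw [e2] at hv2
  rw [hv2] at hv1
  simp at hv1

lemma agrees_red {ex : Var → Bool} {τ : Var → Bool} {T T' : Term}
    (h : IsExistsReduct ex T T') (h' : Agrees ex τ T') : Agrees ex τ T := by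
  rintro ⟨l, he, hm, hv⟩
  refine h' ⟨l, he, (h l.neg).2 ⟨hm, Or.inl ?_⟩, hv⟩
  simpa [Lit.neg] using he

lemma trace {ex : Var → Bool} {φ : Finset Clause} {π : List Term}
    (h : ∀ i : Fin π.length, LitSetOk (π.get i) ∧
      (ModelGen φ (π.get i) ∨
        (∃ j : Fin π.length, j < i ∧ IsExistsReduct ex (π.get j) (π.get i)) ∨
        (∃ j k : Fin π.length, j < i ∧ k < i ∧ ∃ p : Lit,
          ResOk p (π.get j) (π.get k) ∧ π.get i = resOf p (π.get j) (π.get k))))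
    (τ : Var → Bool) :
    ∀ i : Fin π.length, Agrees ex τ (π.get i) →
      ∃ j : Fin π.length, ModelGen φ (π.get j) ∧ LitSetOk (π.get j) ∧ Agrees ex τ (π.get j) := by
  have main : ∀ m : ℕ, ∀ i : Fin π.length, i.val < m → Agrees ex τ (π.get i) →
      ∃ j : Fin π.length, ModelGen φ (π.get j) ∧ LitSetOk (π.get j) ∧ Agrees ex τ (π.get j) := by
    intro m
    induction m with
    | zero => intro i hi; omega
    | succ m ih =>
      intro i hi hag
      rcases (h i).2 with hmg | ⟨j, hji, hred⟩ | ⟨j, k, hji, hki, p, hok, heq⟩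
      · exact ⟨i, hmg, (h i).1, hag⟩
      · exact ih j (by omega) (agrees_red hred hag)
      · rw [heq] at hag
        rcases agrees_res hag with hA | hB
        · exact ih j (by omega) hA
        · exact ih k (by omega) hB
  exact fun i => main (i.val + 1) i (Nat.lt_succ_self _)

lemma modelGen_u {n : ℕ} {T : Term} (hok : LitSetOk T) (hmg : ModelGen (PhiMatrix n) T)
    {i : ℕ} (hi : i < n) : uLit i true ∈ T ∨ uLit i false ∈ T := by
  have hp : posClause i ∈ PhiMatrix n :=
    Finset.mem_biUnion.2 ⟨i, Finset.mem_range.2 hi, by simp⟩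
  have hq : negClause i ∈ PhiMatrix n :=
    Finset.mem_biUnion.2 ⟨i, Finset.mem_range.2 hi, by simp⟩
  obtain ⟨l1, hl1, hl1T⟩ := hmg _ hp
  obtain ⟨l2, hl2, hl2T⟩ := hmg _ hq
  rcases Finset.mem_insert.1 hl1 with h1 | h1
  · exact Or.inr (h1 ▸ hl1T)
  rcases Finset.mem_insert.1 hl2 with h2 | h2
  · exact Or.inl (h2 ▸ hl2T)
  · exfalso
    rw [Finset.mem_singleton] at h1 h2
    subst h1; subst h2
    have : (eLit i true).neg = eLit i false := by simp [Lit.neg, eLit]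
    exact hok _ hl1T (this ▸ hl2T)

lemma agrees_u_true {τ : Var → Bool} {T : Term} (ha : Agrees phiEx τ T)
    {i : ℕ} (hm : uLit i true ∈ T) : τ (2 * i) = true := by
  by_contra hc
  rw [Bool.not_eq_true] at hc
  refine ha ⟨uLit i false, ?_, ?_, ?_⟩
  · simp [phiEx, uLit, Nat.mul_mod_right]
  · simpa [Lit.neg, uLit] using hm
  · simp [evalLit, uLit, hc]

lemma agrees_u_false {τ : Var → Bool} {T : Term} (ha : Agrees phiEx τ T)
    {i : ℕ} (hm : uLit i false ∈ T) : τ (2 * i) = false := by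
  by_contra hc
  rw [Bool.not_eq_false] at hc
  refine ha ⟨uLit i true, ?_, ?_, ?_⟩
  · simp [phiEx, uLit, Nat.mul_mod_right]
  · simpa [Lit.neg, uLit] using hm
  · simp [evalLit, uLit, hc]

/-- The universal assignment induced by `f : Fin n → Bool`. -/
def tauOf (n : ℕ) (f : Fin n → Bool) : Var → Bool :=
  fun v => if h : v / 2 < n then f ⟨v / 2, h⟩ else false

lemma tauOf_u {n : ℕ} (f : Fin n → Bool) (i : Fin n) : tauOf n f (2 * i.val) = f i := by
  have h2 : (2 * i.val) / 2 = i.val := by omega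
  simp only [tauOf, h2, i.isLt, dif_pos]

theorem stmt0 (n : ℕ) (hn : 1 ≤ n) (π : List Term)
    (hπ : IsTermResProof phiEx (PhiMatrix n) π (∅ : Term)) :
    2 ^ n ≤ π.toFinset.card := by
  obtain ⟨hne, hlast, h⟩ := hπ
  have hlen : 0 < π.length := List.length_pos_iff.2 hne
  have hgetL : π.get ⟨π.length - 1, by omega⟩ = (∅ : Term) := by
    rw [List.getLast?_eq_getLast hne] at hlast
    have := List.getLast_eq_getElem hne
    rw [this] at hlast
    exact Option.some_injective _ hlast
  have key : ∀ f : Fin n → Bool, ∃ j : Fin π.length,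
      ModelGen (PhiMatrix n) (π.get j) ∧ LitSetOk (π.get j) ∧
        Agrees phiEx (tauOf n f) (π.get j) := by
    intro f
    refine trace h (tauOf n f) ⟨π.length - 1, by omega⟩ ?_
    rw [hgetL]
    rintro ⟨l, _, hm, _⟩
    simp at hm
  classical
  set g : (Fin n → Bool) → Term := fun f => π.get (key f).choose with hg
  have hprop : ∀ f, ModelGen (PhiMatrix n) (g f) ∧ LitSetOk (g f) ∧
      Agrees phiEx (tauOf n f) (g f) := fun f => (key f).choose_spec
  have hmem : ∀ f, g f ∈ π.toFinset := by
    intro f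
    exact List.mem_toFinset.2 (π.get_mem _)
  have hinj : Set.InjOn g (Finset.univ : Finset (Fin n → Bool)) := by
    intro f1 _ f2 _ heq
    funext i
    rcases modelGen_u (hprop f1).2.1 (hprop f1).1 i.isLt with hu | hu
    · have e1 := agrees_u_true (hprop f1).2.2 hu
      have e2 := agrees_u_true (hprop f2).2.2 (heq ▸ hu)
      rw [tauOf_u] at e1 e2
      rw [e1, e2]
    · have e1 := agrees_u_false (hprop f1).2.2 hu
      have e2 := agrees_u_false (hprop f2).2.2 (heq ▸ hu)
      rw [tauOf_u] at e1 e2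
      rw [e1, e2]
  have := Finset.card_le_card_of_injOn g (fun f _ => hmem f) hinj
  simpa using this
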